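/- Let C ⊆ ℝ² be a closed set whose projections onto the x-axis and the y-axis each have Lebesgue measure zero. Then for any Lipschitz curve γ : ℝ → ℝ², the set E = {t ∈ ℝ : γ(t) ∈ C and γ is differentiable at t with γ'(t) ≠ 0} has Lebesgue measure zero. -/

import Mathlib

open MeasureTheory Set

/-- Key 1D lemma: if `N` is null, then the set of points where `g` takes values in `N`,
is differentiable with nonzero derivative, is null. -/
lemma aux_null (g : ℝ → ℝ) (N : Set ℝ) (hN : volume N = 0) :
    volume {t : ℝ | g t ∈ N ∧ DifferentiableAt ℝ g t ∧ deriv g t ≠ 0} = 0 := by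
  set A := {t : ℝ | g t ∈ N ∧ DifferentiableAt ℝ g t ∧ deriv g t ≠ 0} with hA
  set B : ℕ → Set ℝ := fun n =>
    {t | t ∈ A ∧ ∀ s : ℝ, |s - t| ≤ 1 / (n + 1) → |s - t| ≤ (n + 1) * |g s - g t|} with hB
  have cover : A ⊆ ⋃ (n : ℕ) (k : ℤ),
      B n ∩ Icc ((k : ℝ) / (n + 1)) ((k + 1 : ℝ) / (n + 1)) := by
    intro t ht
    obtain ⟨htN, hdiff, hd0⟩ := ht
    set d := deriv g t with hdd
    have hc : 0 < |d| := abs_pos.mpr hd0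
    have hder : HasDerivAt g d t := hdiff.hasDerivAt
    have hlo := (hasDerivAt_iff_isLittleO.mp hder).def (half_pos hc)
    rw [Metric.eventually_nhds_iff] at hlo
    obtain ⟨ε, hε, hεs⟩ := hlo
    obtain ⟨n, hn⟩ := exists_nat_one_div_lt (lt_min hε (half_pos hc))
    have hn1 : (0:ℝ) < (n:ℝ) + 1 := by positivity
    have hmem : t ∈ B n := by
      refine ⟨⟨htN, hdiff, hd0⟩, fun s hs => ?_⟩
      have hsε : dist s t < ε := by
        rw [Real.dist_eq]
        exact lt_of_le_of_lt hs (lt_of_lt_of_le hn (min_le_left _ _))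
      have h1 := hεs hsε
      have hnorm : |g s - g t - (s - t) * d| ≤ |d| / 2 * |s - t| := by
        simpa [Real.norm_eq_abs, smul_eq_mul] using h1
      have habs : |(s - t) * d| - |g s - g t| ≤ |g s - g t - (s - t) * d| := by
        have := abs_sub_abs_le_abs_sub ((s - t) * d) (g s - g t)
        calc |(s - t) * d| - |g s - g t| ≤ |(s - t) * d - (g s - g t)| := this
          _ = |g s - g t - (s - t) * d| := abs_sub_comm _ _
      have hmul : |(s - t) * d| = |s - t| * |d| := abs_mul _ _
      have h2 : |d| / 2 * |s - t| ≤ |g s - g t| := by nlinarith [abs_nonneg (s - t)]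
      have hd2 : 1 / ((n : ℝ) + 1) ≤ |d| / 2 :=
        le_of_lt (lt_of_lt_of_le hn (min_le_right _ _))
      have h3 : 1 / ((n : ℝ) + 1) * |s - t| ≤ |g s - g t| :=
        le_trans (mul_le_mul_of_nonneg_right hd2 (abs_nonneg _)) h2
      calc |s - t| = ((n:ℝ) + 1) * (1 / ((n:ℝ) + 1) * |s - t|) := by
            field_simp
        _ ≤ ((n:ℝ) + 1) * |g s - g t| := by
            exact mul_le_mul_of_nonneg_left h3 (le_of_lt hn1)
    refine mem_iUnion.mpr ⟨n, mem_iUnion.mpr ⟨⌊t * ((n:ℝ) + 1)⌋, hmem, ?_, ?_⟩⟩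
    · rw [div_le_iff₀ hn1]
      exact Int.floor_le _
    · rw [le_div_iff₀ hn1]
      push_cast
      exact le_of_lt (Int.lt_floor_add_one _)
  have piece : ∀ (n : ℕ) (k : ℤ),
      volume (B n ∩ Icc ((k : ℝ) / (n + 1)) ((k + 1 : ℝ) / (n + 1))) = 0 := by
    intro n k
    set S := B n ∩ Icc ((k : ℝ) / (n + 1)) ((k + 1 : ℝ) / (n + 1)) with hS
    have hn1 : (0:ℝ) < (n:ℝ) + 1 := by positivity
    have hlen : ((k:ℝ) + 1) / ((n:ℝ) + 1) - (k:ℝ) / ((n:ℝ) + 1) = 1 / ((n:ℝ) + 1) := by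
      rw [div_sub_div_same]; ring_nf
    have key : ∀ t₁ ∈ S, ∀ t₂ ∈ S, |t₁ - t₂| ≤ ((n:ℝ) + 1) * |g t₁ - g t₂| := by
      intro t₁ h₁ t₂ h₂
      have hI₁ := h₁.2
      have hI₂ := h₂.2
      have hd : |t₁ - t₂| ≤ 1 / ((n:ℝ) + 1) := by
        simp only [mem_Icc] at hI₁ hI₂
        rw [abs_le]
        constructor <;> linarith [hlen]
      have := h₂.1.2 t₁ hd
      calc |t₁ - t₂| ≤ ((n:ℝ) + 1) * |g t₁ - g t₂| := this
        _ = ((n:ℝ) + 1) * |g t₁ - g t₂| := rfl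
    have hinj : InjOn g S := by
      intro t₁ h₁ t₂ h₂ he
      have h := key t₁ h₁ t₂ h₂
      rw [he] at h
      simp only [sub_self, abs_zero, mul_zero] at h
      have : |t₁ - t₂| = 0 := le_antisymm h (abs_nonneg _)
      exact sub_eq_zero.mp (abs_eq_zero.mp this)
    set f := Function.invFunOn g S with hf
    have hfg : ∀ t ∈ S, f (g t) = t := fun t ht => hinj.leftInvOn_invFunOn ht
    have hlinv : LipschitzOnWith ((n : NNReal) + 1) f (g '' S) := by
      apply LipschitzOnWith.of_dist_le_mul
      rintro y₁ ⟨t₁, h₁, rfl⟩ y₂ ⟨t₂, h₂, rfl⟩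
      rw [hfg t₁ h₁, hfg t₂ h₂, Real.dist_eq, Real.dist_eq]
      have := key t₁ h₁ t₂ h₂
      push_cast
      exact this
    have hsub : S ⊆ f '' (g '' S) := by
      intro t ht
      exact ⟨g t, mem_image_of_mem _ ht, hfg t ht⟩
    have himgN : g '' S ⊆ N := by
      rintro y ⟨t, ht, rfl⟩
      exact ht.1.1.1
    refine le_antisymm ?_ (zero_le)
    calc volume S ≤ volume (f '' (g '' S)) := measure_mono hsub
      _ = μH[1] (f '' (g '' S)) := by rw [MeasureTheory.hausdorffMeasure_real]
      _ ≤ (((n : NNReal) + 1 : NNReal) : ENNReal) ^ (1:ℝ) * μH[1] (g '' S) :=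
          hlinv.hausdorffMeasure_image_le zero_le_one
      _ ≤ (((n : NNReal) + 1 : NNReal) : ENNReal) ^ (1:ℝ) * μH[1] N := by
          exact mul_le_mul_right (measure_mono himgN) _
      _ = (((n : NNReal) + 1 : NNReal) : ENNReal) ^ (1:ℝ) * volume N := by
          rw [MeasureTheory.hausdorffMeasure_real]
      _ = 0 := by rw [hN, mul_zero]
  refine measure_mono_null cover ?_
  exact measure_iUnion_null fun n => measure_iUnion_null fun k => piece n k

theorem stmt2 (C : Set (ℝ × ℝ)) (hC : IsClosed C)
    (h1 : volume (Prod.fst '' C) = 0) (h2 : volume (Prod.snd '' C) = 0)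
    (γ : ℝ → ℝ × ℝ) (K : NNReal) (hγ : LipschitzWith K γ) :
    volume {t : ℝ | γ t ∈ C ∧ DifferentiableAt ℝ γ t ∧ deriv γ t ≠ 0} = 0 := by
  set g₁ : ℝ → ℝ := fun t => (γ t).1 with hg₁
  set g₂ : ℝ → ℝ := fun t => (γ t).2 with hg₂
  have hsub : {t : ℝ | γ t ∈ C ∧ DifferentiableAt ℝ γ t ∧ deriv γ t ≠ 0} ⊆
      {t : ℝ | g₁ t ∈ Prod.fst '' C ∧ DifferentiableAt ℝ g₁ t ∧ deriv g₁ t ≠ 0} ∪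
      {t : ℝ | g₂ t ∈ Prod.snd '' C ∧ DifferentiableAt ℝ g₂ t ∧ deriv g₂ t ≠ 0} := by
    rintro t ⟨htC, hdiff, hd⟩
    have hder : HasDerivAt γ (deriv γ t) t := hdiff.hasDerivAt
    have hder1 : HasDerivAt g₁ (deriv γ t).1 t :=
      (ContinuousLinearMap.fst ℝ ℝ ℝ).hasFDerivAt.comp_hasDerivAt t hder
    have hder2 : HasDerivAt g₂ (deriv γ t).2 t :=
      (ContinuousLinearMap.snd ℝ ℝ ℝ).hasFDerivAt.comp_hasDerivAt t hder
    have hcase : (deriv γ t).1 ≠ 0 ∨ (deriv γ t).2 ≠ 0 := by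
      by_contra h
      push_neg at h
      exact hd (Prod.ext h.1 h.2)
    rcases hcase with h | h
    · left
      exact ⟨⟨γ t, htC, rfl⟩, hder1.differentiableAt, by rw [hder1.deriv]; exact h⟩
    · right
      exact ⟨⟨γ t, htC, rfl⟩, hder2.differentiableAt, by rw [hder2.deriv]; exact h⟩
  refine measure_mono_null hsub (measure_union_null ?_ ?_)
  · exact aux_null g₁ _ h1
  · exact aux_null g₂ _ h2
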